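/- Let ⟨N, M0⟩ be a bounded marked Petri net with a basis partition π = (T_E, T_I) and set of minimax basis markings M_BM. A marking M ∈ R(N, M0) is dead if and only if there exist a minimax basis marking M_b ∈ M_BM and a maximal implicit firing sequence σ ∈ Σ_I,max(M_b) such that M_b[σ⟩M and for every explicit transition t ∈ T_E, σ ∉ Σ_max(M_b, t). -/

import Mathlib

open scoped BigOperators

/-- A Petri net over places `P` and transitions `T`. -/
structure PetriNet (P T : Type) where
  Pre : P → T → ℕ
  Post : P → T → ℕ

namespace PetriNet

variable {P T : Type}

/-- Incidence matrix `C = Post − Pre` (integer valued). -/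
def C (N : PetriNet P T) (p : P) (t : T) : ℤ :=
  (N.Post p t : ℤ) - (N.Pre p t : ℤ)

/-- A transition `t` is enabled at marking `M`. -/
def Enabled (N : PetriNet P T) (M : P → ℕ) (t : T) : Prop :=
  ∀ p, N.Pre p t ≤ M p

/-- `Fires N M σ M'` means the sequence `σ` is enabled at `M` and its firing
yields `M'`, i.e. `M[σ⟩M'`. -/
inductive Fires (N : PetriNet P T) : (P → ℕ) → List T → (P → ℕ) → Prop
  | nil (M : P → ℕ) : Fires N M [] M
  | cons {M M' M'' : P → ℕ} {t : T} {σ : List T} :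
      N.Enabled M t →
      (∀ p, M' p = M p + N.Post p t - N.Pre p t) →
      Fires N M' σ M'' →
      Fires N M (t :: σ) M''

/-- The reachability set `R(N, M0)`. -/
def Reach (N : PetriNet P T) (M0 : P → ℕ) : Set (P → ℕ) :=
  {M | ∃ σ : List T, N.Fires M0 σ M}

/-- Arcs of the underlying directed graph on `P ⊕ T`, where only transitions
in `TI` are kept (the `TI`-induced subnet). -/
def Arc (N : PetriNet P T) (TI : Set T) : (P ⊕ T) → (P ⊕ T) → Prop
  | Sum.inl p, Sum.inr t => t ∈ TI ∧ 0 < N.Pre p t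
  | Sum.inr t, Sum.inl p => t ∈ TI ∧ 0 < N.Post p t
  | _, _ => False

/-- The `TI`-induced subnet is acyclic: no directed cycle in its graph. -/
def AcyclicOn (N : PetriNet P T) (TI : Set T) : Prop :=
  ∀ x, ¬ Relation.TransGen (N.Arc TI) x x

/-- `(TE, TI)` is a basis partition: `TE` and `TI` partition `T` and the
`TI`-induced subnet is acyclic. -/
def IsBasisPartition (N : PetriNet P T) (TE TI : Set T) : Prop :=
  (∀ t, t ∈ TE ↔ t ∉ TI) ∧ N.AcyclicOn TI

/-- Boundedness of the marked net `⟨N, M0⟩`. -/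
def Bounded (N : PetriNet P T) (M0 : P → ℕ) : Prop :=
  ∃ k : ℕ, ∀ M ∈ N.Reach M0, ∀ p, M p ≤ k

/-- A marking is dead if no transition is enabled at it. -/
def Dead (N : PetriNet P T) (M : P → ℕ) : Prop :=
  ∀ t : T, ¬ N.Enabled M t

/-- The set `Σ(M, t)` of explanations of `t` at `M`: implicit sequences whose
firing from `M` yields a marking enabling `t`. -/
def Expl (N : PetriNet P T) (TI : Set T) (M : P → ℕ) (t : T) : Set (List T) :=
  {σ | (∀ u ∈ σ, u ∈ TI) ∧ ∃ M', N.Fires M σ M' ∧ ∀ p, N.Pre p t ≤ M' p}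

/-- The set `Σ_min(M, t)` of minimal explanations of `t` at `M`. -/
def ExplMin [DecidableEq T] (N : PetriNet P T) (TI : Set T) (M : P → ℕ) (t : T) :
    Set (List T) :=
  {σ | σ ∈ N.Expl TI M t ∧
    ¬ ∃ σ' ∈ N.Expl TI M t,
      (∀ u, σ'.count u ≤ σ.count u) ∧ ∃ u, σ'.count u ≠ σ.count u}

/-- The set `Σ_max(M, t)` of maximal explanations of `t` at `M`. -/
def ExplMax [DecidableEq T] (N : PetriNet P T) (TI : Set T) (M : P → ℕ) (t : T) :
    Set (List T) :=
  {σ | σ ∈ N.Expl TI M t ∧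
    ¬ ∃ σ' ∈ N.Expl TI M t,
      (∀ u, σ.count u ≤ σ'.count u) ∧ ∃ u, σ'.count u ≠ σ.count u}

/-- `Y_min(M, t)`: firing vectors of minimal explanations. -/
def Ymin [DecidableEq T] (N : PetriNet P T) (TI : Set T) (M : P → ℕ) (t : T) :
    Set (T → ℕ) :=
  {y | ∃ σ ∈ N.ExplMin TI M t, ∀ u, σ.count u = y u}

/-- `Y_max(M, t)`: firing vectors of maximal explanations. -/
def Ymax [DecidableEq T] (N : PetriNet P T) (TI : Set T) (M : P → ℕ) (t : T) :
    Set (T → ℕ) :=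
  {y | ∃ σ ∈ N.ExplMax TI M t, ∀ u, σ.count u = y u}

/-- The set of basis markings `M_B` (smallest set containing `M0` and closed
under minimal-explanation steps). -/
inductive Basis [DecidableEq T] [Fintype T] (N : PetriNet P T) (TE TI : Set T)
    (M0 : P → ℕ) : (P → ℕ) → Prop
  | base : Basis N TE TI M0 M0
  | step {M M' : P → ℕ} {t : T} {y : T → ℕ} :
      Basis N TE TI M0 M →
      t ∈ TE →
      y ∈ N.Ymin TI M t →
      (∀ p, (M' p : ℤ) = (M p : ℤ) + (∑ u, N.C p u * y u) + N.C p t) →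
      Basis N TE TI M0 M'

/-- The set of minimax basis markings `M_BM` (smallest set containing `M0` and
closed under minimal- or maximal-explanation steps). -/
inductive Minimax [DecidableEq T] [Fintype T] (N : PetriNet P T) (TE TI : Set T)
    (M0 : P → ℕ) : (P → ℕ) → Prop
  | base : Minimax N TE TI M0 M0
  | step {M M' : P → ℕ} {t : T} {y : T → ℕ} :
      Minimax N TE TI M0 M →
      t ∈ TE →
      (y ∈ N.Ymin TI M t ∨ y ∈ N.Ymax TI M t) →
      (∀ p, (M' p : ℤ) = (M p : ℤ) + (∑ u, N.C p u * y u) + N.C p t) →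
      Minimax N TE TI M0 M'

/-- The implicit reach `R_I(M_b)`: markings reachable from `M_b` by firing
only implicit transitions. -/
def ReachI (N : PetriNet P T) (TI : Set T) (Mb : P → ℕ) : Set (P → ℕ) :=
  {M | ∃ σ : List T, (∀ u ∈ σ, u ∈ TI) ∧ N.Fires Mb σ M}

/-- One step of the minimax-BRG: `M1 ⇒ M2`. -/
def BrgStep [DecidableEq T] [Fintype T] (N : PetriNet P T) (TE TI : Set T)
    (M1 M2 : P → ℕ) : Prop :=
  ∃ t ∈ TE, ∃ y : T → ℕ, (y ∈ N.Ymin TI M1 t ∨ y ∈ N.Ymax TI M1 t) ∧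
    ∀ p, (M2 p : ℤ) = (M1 p : ℤ) + (∑ u, N.C p u * y u) + N.C p t

/-- One step of the BRG using only minimal explanations. -/
def MinBrgStep [DecidableEq T] [Fintype T] (N : PetriNet P T) (TE TI : Set T)
    (M1 M2 : P → ℕ) : Prop :=
  ∃ t ∈ TE, ∃ y ∈ N.Ymin TI M1 t,
    ∀ p, (M2 p : ℤ) = (M1 p : ℤ) + (∑ u, N.C p u * y u) + N.C p t

/-- The minimax-BRG is unobstructed: every minimax basis marking can reach, by
BRG-steps, an i-coreachable minimax basis marking. -/
def Unobstructed [DecidableEq T] [Fintype T] (N : PetriNet P T) (TE TI : Set T)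
    (M0 : P → ℕ) (MF : Set (P → ℕ)) : Prop :=
  ∀ Mb, N.Minimax TE TI M0 Mb →
    ∃ Mb', Relation.ReflTransGen (N.BrgStep TE TI) Mb Mb' ∧
      N.Minimax TE TI M0 Mb' ∧ (N.ReachI TI Mb' ∩ MF).Nonempty

/-- `Σ_I,max(M)`: maximal implicit firing sequences at `M`. -/
def ImplMax [DecidableEq T] (N : PetriNet P T) (TI : Set T) (M : P → ℕ) :
    Set (List T) :=
  {σ | (∀ u ∈ σ, u ∈ TI) ∧ (∃ M', N.Fires M σ M') ∧
    ¬ ∃ σ' : List T, (∀ u ∈ σ', u ∈ TI) ∧ (∃ M', N.Fires M σ' M') ∧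
      (∀ u, σ.count u ≤ σ'.count u) ∧ ∃ u, σ'.count u ≠ σ.count u}

/-- `Y_I,max(M)`: firing vectors of maximal implicit firing sequences. -/
def YImax [DecidableEq T] (N : PetriNet P T) (TI : Set T) (M : P → ℕ) :
    Set (T → ℕ) :=
  {y | ∃ σ ∈ N.ImplMax TI M, ∀ u, σ.count u = y u}

end PetriNet


namespace PetriNet
variable {P T : Type}

lemma fires_det {N : PetriNet P T} : ∀ {M σ M1 M2}, N.Fires M σ M1 → N.Fires M σ M2 → M1 = M2 := by
  intro M σ M1 M2 h1 h2
  induction h1 generalizing M2 with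
  | nil => cases h2; rfl
  | cons hEn hM' h ih =>
    cases h2 with
    | cons hEn2 hM2' h2' =>
      apply ih
      have heq : _ = _ := funext fun p => (hM' p).trans (hM2' p).symm
      rwa [heq]

lemma fires_append {N : PetriNet P T} {M M1 M2 : P → ℕ} {σ1 σ2 : List T}
    (h1 : N.Fires M σ1 M1) (h2 : N.Fires M1 σ2 M2) : N.Fires M (σ1 ++ σ2) M2 := by
  induction h1 with
  | nil => exact h2
  | cons hEn hM' _ ih => exact Fires.cons hEn hM' (ih h2)

lemma count_cons' [DecidableEq T] (a b : T) (l : List T) :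
    (b :: l).count a = l.count a + if a = b then 1 else 0 := by
  rw [List.count_cons]
  by_cases h : a = b
  · simp [h]
  · simp [h]; exact fun hh => h hh.symm

lemma fires_eq [Fintype T] [DecidableEq T] {N : PetriNet P T} {M M' : P → ℕ} {σ : List T}
    (h : N.Fires M σ M') : ∀ p, (M' p : ℤ) = M p + ∑ u, N.C p u * σ.count u := by
  induction h with
  | nil => simp
  | @cons Ma Mb Mc t σ' hEn hM' hf ih =>
    intro p
    have h1 : (Mb p : ℤ) = Ma p + N.C p t := by
      have := hM' p; have := hEn p; unfold C; omega
    have h2 : ∑ u, N.C p u * (((t :: σ').count u : ℕ) : ℤ)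
        = (∑ u, N.C p u * (σ'.count u : ℤ)) + N.C p t := by
      have key : ∀ u, (((t :: σ').count u : ℕ) : ℤ)
          = (σ'.count u : ℤ) + if u = t then 1 else 0 := by
        intro u; rw [count_cons']; push_cast; split <;> simp
      rw [Finset.sum_congr rfl fun u _ => by rw [key u, mul_add]]
      rw [Finset.sum_add_distrib]
      congr 1
      rw [Finset.sum_congr rfl fun u _ => by rw [mul_ite, mul_one, mul_zero]]
      simp [Finset.sum_ite_eq']
    rw [ih p, h2, h1]; ring

end PetriNet

namespace PetriNet

lemma acyclic_fire [Fintype T] [DecidableEq T] (N : PetriNet P T) (TI : Set T)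
    (hac : N.AcyclicOn TI) :
    ∀ (n : ℕ) (y : T → ℕ), (∑ u, y u) = n → (∀ u, y u ≠ 0 → u ∈ TI) →
      ∀ M : P → ℕ, (∀ p, 0 ≤ (M p : ℤ) + ∑ u, N.C p u * y u) →
      ∃ σ M', (∀ u ∈ σ, u ∈ TI) ∧ (∀ u, σ.count u = y u) ∧ N.Fires M σ M' := by
  intro n
  induction n with
  | zero =>
    intro y hsum _ M _
    have hy : ∀ u, y u = 0 := by
      intro u
      have := Finset.sum_eq_zero_iff.mp hsum u (Finset.mem_univ u)
      exact this
    exact ⟨[], M, by simp, fun u => by simp [hy u], Fires.nil M⟩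
  | succ n ih =>
    intro y hsum hTI M hpos
    have hex : {u | y u ≠ 0}.Nonempty := by
      by_contra h
      rw [Set.not_nonempty_iff_eq_empty] at h
      have hz : ∀ u, y u = 0 := fun u => by
        by_contra hu
        exact (Set.eq_empty_iff_forall_notMem.mp h u) hu
      simp [hz] at hsum
    have hwf : WellFounded (fun a b : T =>
        Relation.TransGen (N.Arc TI) (Sum.inr a) (Sum.inr b)) := by
      haveI : IsTrans T (fun a b : T =>
          Relation.TransGen (N.Arc TI) (Sum.inr a) (Sum.inr b)) :=
        ⟨fun _ _ _ => Relation.TransGen.trans⟩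
      haveI : IsIrrefl T (fun a b : T =>
          Relation.TransGen (N.Arc TI) (Sum.inr a) (Sum.inr b)) :=
        ⟨fun a h => hac _ h⟩
      exact Finite.wellFounded_of_trans_of_irrefl _
    obtain ⟨t, ht, hmin⟩ := hwf.has_min {u | y u ≠ 0} hex
    have hpost : ∀ p, 0 < N.Pre p t → ∀ u, y u ≠ 0 → N.Post p u = 0 := by
      intro p hp u hu
      by_contra hpo
      have harc1 : N.Arc TI (Sum.inr u) (Sum.inl p) := ⟨hTI u hu, Nat.pos_of_ne_zero hpo⟩
      have harc2 : N.Arc TI (Sum.inl p) (Sum.inr t) := ⟨hTI t ht, hp⟩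
      by_cases hut : u = t
      · subst hut
        exact hac (Sum.inl p)
          ((Relation.TransGen.single harc2).trans (Relation.TransGen.single harc1))
      · exact hmin u hu (Relation.TransGen.tail (Relation.TransGen.single harc1) harc2)
    have hEn : N.Enabled M t := by
      intro p
      by_cases hp : 0 < N.Pre p t
      · have hb : ∑ u, N.C p u * (y u : ℤ)
            ≤ ∑ u, (if u = t then -(N.Pre p t : ℤ) else 0) := by
          apply Finset.sum_le_sum
          intro u _
          by_cases hut : u = t
          · subst hut
            have hpo := hpost p hp u ht
            have hyt : 1 ≤ (y u : ℤ) := by exact_mod_cast Nat.one_le_iff_ne_zero.mpr ht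
            have : N.C p u = -(N.Pre p u : ℤ) := by unfold C; rw [hpo]; push_cast; ring
            rw [this, if_pos rfl]
            have hnn : (0:ℤ) ≤ (N.Pre p u : ℤ) := Int.natCast_nonneg _
            nlinarith
          · simp only [if_neg hut]
            by_cases hu : y u = 0
            · simp [hu]
            · have hpo := hpost p hp u hu
              have : N.C p u = -(N.Pre p u : ℤ) := by unfold C; rw [hpo]; push_cast; ring
              rw [this]
              have h1 : (0:ℤ) ≤ (N.Pre p u : ℤ) := Int.natCast_nonneg _
              have h2 : (0:ℤ) ≤ (y u : ℤ) := Int.natCast_nonneg _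
              nlinarith
        have hsumite : ∑ u, (if u = t then -(N.Pre p t : ℤ) else 0) = -(N.Pre p t : ℤ) := by
          rw [Finset.sum_ite_eq' Finset.univ t (fun _ => -(N.Pre p t : ℤ))]
          simp
        have := hpos p
        have : (N.Pre p t : ℤ) ≤ (M p : ℤ) := by
          rw [hsumite] at hb; linarith
        exact_mod_cast this
      · omega
    set M1 : P → ℕ := fun p => M p + N.Post p t - N.Pre p t with hM1
    set y1 : T → ℕ := fun u => if u = t then y u - 1 else y u with hy1
    have hyt1 : 1 ≤ y t := Nat.one_le_iff_ne_zero.mpr ht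
    have hy1t : y1 t = y t - 1 := by simp [hy1]
    have hy1ne : ∀ u, u ≠ t → y1 u = y u := fun u hu => by simp [hy1, hu]
    have hsum1 : ∑ u, y1 u = n := by
      have hstep : ∑ u, y1 u + ∑ u, (if u = t then 1 else 0) = ∑ u, y u := by
        rw [← Finset.sum_add_distrib]
        apply Finset.sum_congr rfl
        intro u _
        by_cases hut : u = t
        · rw [hut, hy1t, if_pos rfl]; omega
        · rw [hy1ne u hut, if_neg hut]; omega
      have hone : ∑ u, (if u = t then 1 else 0) = 1 := by
        rw [Finset.sum_ite_eq' Finset.univ t (fun _ => 1)]; simp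
      omega
    have hTI1 : ∀ u, y1 u ≠ 0 → u ∈ TI := by
      intro u hu
      apply hTI u
      by_cases hut : u = t
      · exact hut ▸ ht
      · simpa [hy1, hut] using hu
    have hcast1 : ∀ u, (y1 u : ℤ) = (y u : ℤ) - if u = t then 1 else 0 := by
      intro u
      by_cases hut : u = t
      · rw [hut, hy1t, if_pos rfl]; omega
      · rw [hy1ne u hut, if_neg hut]; simp
    have hpos1 : ∀ p, 0 ≤ (M1 p : ℤ) + ∑ u, N.C p u * y1 u := by
      intro p
      have hMc : (M1 p : ℤ) = (M p : ℤ) + N.C p t := by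
        have h1 := hEn p; simp only [hM1]; unfold C; push_cast; omega
      have hsc : ∑ u, N.C p u * (y1 u : ℤ)
          = (∑ u, N.C p u * (y u : ℤ)) - N.C p t := by
        rw [Finset.sum_congr rfl fun u _ => by rw [hcast1 u, mul_sub]]
        rw [Finset.sum_sub_distrib]
        congr 1
        rw [Finset.sum_congr rfl fun u _ => by rw [mul_ite, mul_one, mul_zero]]
        rw [Finset.sum_ite_eq' Finset.univ t (fun u => N.C p u)]; simp
      rw [hMc, hsc]
      have := hpos p; linarith
    obtain ⟨σ', M', h1, h2, h3⟩ := ih y1 hsum1 hTI1 M1 hpos1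
    refine ⟨t :: σ', M', ?_, ?_, Fires.cons hEn (fun p => rfl) h3⟩
    · intro u hu
      rcases List.mem_cons.mp hu with h | h
      · exact h ▸ hTI t ht
      · exact h1 u h
    · intro u
      rw [count_cons', h2 u]
      by_cases hut : u = t
      · rw [hut, hy1t, if_pos rfl]; omega
      · rw [hy1ne u hut, if_neg hut]; omega

end PetriNet

namespace PetriNet

lemma exists_min_expl [Fintype T] [DecidableEq T] (N : PetriNet P T) (TI : Set T)
    (Mb : P → ℕ) (t : T) :
    ∀ τ ∈ N.Expl TI Mb t, ∃ σm ∈ N.ExplMin TI Mb t, ∀ u, σm.count u ≤ τ.count u := by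
  suffices H : ∀ (n : ℕ) (τ : List T), (∑ u, τ.count u) = n → τ ∈ N.Expl TI Mb t →
      ∃ σm ∈ N.ExplMin TI Mb t, ∀ u, σm.count u ≤ τ.count u by
    intro τ hτ; exact H _ τ rfl hτ
  intro n
  induction n using Nat.strong_induction_on with
  | _ n ih =>
    intro τ hsum hτ
    by_cases hmin : τ ∈ N.ExplMin TI Mb t
    · exact ⟨τ, hmin, fun u => le_refl _⟩
    · have hex : ∃ σ' ∈ N.Expl TI Mb t,
          (∀ u, σ'.count u ≤ τ.count u) ∧ ∃ u, σ'.count u ≠ τ.count u := by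
        by_contra h
        exact hmin ⟨hτ, h⟩
      obtain ⟨σ', hσ', hle, u0, hne⟩ := hex
      have hlt : (∑ u, σ'.count u) < n := by
        rw [← hsum]
        apply Finset.sum_lt_sum (fun u _ => hle u)
        exact ⟨u0, Finset.mem_univ u0, lt_of_le_of_ne (hle u0) hne⟩
      obtain ⟨σm, hσm, hle'⟩ := ih _ hlt σ' rfl hσ'
      exact ⟨σm, hσm, fun u => le_trans (hle' u) (hle u)⟩

lemma reach_basis [Fintype T] [DecidableEq T] (N : PetriNet P T) (TE TI : Set T)
    (M0 : P → ℕ) (hbp : N.IsBasisPartition TE TI) :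
    ∀ {σ : List T} {M : P → ℕ}, N.Fires M0 σ M →
      ∃ Mb τ, N.Minimax TE TI M0 Mb ∧ (∀ u ∈ τ, u ∈ TI) ∧ N.Fires Mb τ M := by
  suffices step : ∀ (Mb : P → ℕ) (τ : List T) (M : P → ℕ) (t : T) (M1 : P → ℕ),
      N.Minimax TE TI M0 Mb → (∀ u ∈ τ, u ∈ TI) → N.Fires Mb τ M →
      N.Enabled M t → (∀ p, M1 p = M p + N.Post p t - N.Pre p t) →
      ∃ Mb' τ', N.Minimax TE TI M0 Mb' ∧ (∀ u ∈ τ', u ∈ TI) ∧ N.Fires Mb' τ' M1 by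
    intro σ M h
    have main : ∀ (σ : List T) (K M : P → ℕ), N.Fires K σ M →
        ∀ Mb τ, N.Minimax TE TI M0 Mb → (∀ u ∈ τ, u ∈ TI) → N.Fires Mb τ K →
        ∃ Mb' τ', N.Minimax TE TI M0 Mb' ∧ (∀ u ∈ τ', u ∈ TI) ∧ N.Fires Mb' τ' M := by
      intro σ K M h
      induction h with
      | nil K => exact fun Mb τ h1 h2 h3 => ⟨Mb, τ, h1, h2, h3⟩
      | @cons Ma Mmid Mc t σ' hEn hM' hf ih =>
        intro Mb τ h1 h2 h3
        obtain ⟨Mb2, τ2, g1, g2, g3⟩ := step Mb τ Ma t Mmid h1 h2 h3 hEn hM'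
        exact ih Mb2 τ2 g1 g2 g3
    exact main σ M0 M h M0 [] Minimax.base (by simp) (Fires.nil M0)
  intro Mb τ M t M1 hMb hτTI hfire hEn hM1
  by_cases htTI : t ∈ TI
  · refine ⟨Mb, τ ++ [t], hMb, ?_, ?_⟩
    · intro u hu
      rcases List.mem_append.mp hu with h | h
      · exact hτTI u h
      · rw [List.mem_singleton.mp h]; exact htTI
    · exact fires_append hfire (Fires.cons hEn hM1 (Fires.nil M1))
  · have htTE : t ∈ TE := (hbp.1 t).mpr htTI
    have hτExpl : τ ∈ N.Expl TI Mb t := ⟨hτTI, M, hfire, hEn⟩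
    obtain ⟨σm, hσm, hlem⟩ := exists_min_expl N TI Mb t τ hτExpl
    obtain ⟨hσmTI, K, hfK, hKt⟩ := hσm.1
    set Kt : P → ℕ := fun p => K p + N.Post p t - N.Pre p t with hKtdef
    have hKtZ : ∀ p, (Kt p : ℤ) = (K p : ℤ) + N.C p t := by
      intro p; have := hKt p; simp only [hKtdef]; unfold C; push_cast; omega
    have hKZ := fires_eq hfK
    have hMZ := fires_eq hfire
    have hM1Z : ∀ p, (M1 p : ℤ) = (M p : ℤ) + N.C p t := by
      intro p; have := hM1 p; have := hEn p; unfold C; push_cast; omega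
    have hKtMb : N.Minimax TE TI M0 Kt := by
      apply Minimax.step hMb htTE (y := fun u => σm.count u)
      · exact Or.inl ⟨σm, hσm, fun u => rfl⟩
      · intro p; rw [hKtZ p, hKZ p]
    set d : T → ℕ := fun u => τ.count u - σm.count u with hd
    have hdZ : ∀ u, (d u : ℤ) = (τ.count u : ℤ) - σm.count u := by
      intro u; have := hlem u; simp only [hd]; push_cast; omega
    have hdTI : ∀ u, d u ≠ 0 → u ∈ TI := by
      intro u hu
      have hc : τ.count u ≠ 0 := by
        simp only [hd] at hu; omega
      have hmem : u ∈ τ := by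
        by_contra hm; exact hc (List.count_eq_zero.mpr hm)
      exact hτTI u hmem
    have hsumd : ∀ p, ∑ u, N.C p u * (d u : ℤ)
        = (∑ u, N.C p u * (τ.count u : ℤ)) - ∑ u, N.C p u * (σm.count u : ℤ) := by
      intro p
      rw [← Finset.sum_sub_distrib]
      apply Finset.sum_congr rfl
      intro u _; rw [hdZ u]; ring
    have hsumZ : ∀ p, 0 ≤ (Kt p : ℤ) + ∑ u, N.C p u * d u := by
      intro p
      rw [hKtZ p, hKZ p, hsumd p]
      have e1 := hM1Z p; have e2 := hMZ p
      have h0 : (0:ℤ) ≤ (M1 p : ℤ) := Int.natCast_nonneg _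
      linarith
    obtain ⟨ρ, Mρ, hρTI, hρcount, hρfire⟩ :=
      acyclic_fire N TI hbp.2 (∑ u, d u) d rfl hdTI Kt hsumZ
    have hMρ : Mρ = M1 := by
      funext p
      have e1 := fires_eq hρfire p
      have : (Mρ p : ℤ) = (M1 p : ℤ) := by
        have hc : ∑ u, N.C p u * ((ρ.count u : ℕ) : ℤ) = ∑ u, N.C p u * (d u : ℤ) := by
          apply Finset.sum_congr rfl; intro u _; rw [hρcount u]
        rw [e1, hc, hsumd p, hKtZ p, hKZ p, hM1Z p, hMZ p]; ring
      exact_mod_cast this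
    exact ⟨Kt, ρ, hKtMb, hρTI, hMρ ▸ hρfire⟩

end PetriNet
open PetriNet in
/-- **Proposition 7.** A reachable marking `M` is dead iff it is
reached from some minimax basis marking `M_b` by a maximal implicit firing
sequence `σ` which is not a maximal explanation of any explicit transition at
`M_b`. -/
theorem statement13 {P T : Type} [Fintype T] [DecidableEq T]
    (N : PetriNet P T) (M0 : P → ℕ) (TE TI : Set T)
    (hbp : N.IsBasisPartition TE TI) (hbnd : N.Bounded M0)
    (M : P → ℕ) (hM : M ∈ N.Reach M0) :
    N.Dead M ↔
      ∃ (Mb : P → ℕ) (σ : List T), N.Minimax TE TI M0 Mb ∧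
        σ ∈ N.ImplMax TI Mb ∧ N.Fires Mb σ M ∧
        ∀ t ∈ TE, σ ∉ N.ExplMax TI Mb t := by
  constructor
  · -- forward: dead ⇒ representation
    intro hdead
    obtain ⟨σ0, hσ0⟩ := hM
    obtain ⟨Mb, τ, hMb, hτTI, hfire⟩ := reach_basis N TE TI M0 hbp hσ0
    refine ⟨Mb, τ, hMb, ⟨hτTI, ⟨M, hfire⟩, ?_⟩, hfire, ?_⟩
    · rintro ⟨σ', hσ'TI, ⟨M'', hf''⟩, hle, u0, hne⟩
      set d : T → ℕ := fun u => σ'.count u - τ.count u with hd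
      have hdZ : ∀ u, (d u : ℤ) = (σ'.count u : ℤ) - τ.count u := fun u => by
        have := hle u; simp only [hd]; push_cast; omega
      have hdTI : ∀ u, d u ≠ 0 → u ∈ TI := by
        intro u hu
        have hc : σ'.count u ≠ 0 := by simp only [hd] at hu; omega
        exact hσ'TI u (by by_contra hm; exact hc (List.count_eq_zero.mpr hm))
      have hMZ := fires_eq hfire
      have hM''Z := fires_eq hf''
      have hpos : ∀ p, 0 ≤ (M p : ℤ) + ∑ u, N.C p u * d u := by
        intro p
        have hsumd : ∑ u, N.C p u * (d u : ℤ)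
            = (∑ u, N.C p u * (σ'.count u : ℤ)) - ∑ u, N.C p u * (τ.count u : ℤ) := by
          rw [← Finset.sum_sub_distrib]
          apply Finset.sum_congr rfl
          intro u _; rw [hdZ u]; ring
        rw [hsumd]
        have h0 : (0:ℤ) ≤ (M'' p : ℤ) := Int.natCast_nonneg _
        have e1 := hMZ p; have e2 := hM''Z p
        linarith
      obtain ⟨ρ, Mρ, hρTI, hρcount, hρfire⟩ :=
        acyclic_fire N TI hbp.2 (∑ u, d u) d rfl hdTI M hpos
      have hdu0 : d u0 ≠ 0 := by
        have := hle u0; simp only [hd]; omega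
      cases hρfire with
      | nil =>
        exact hdu0 ((hρcount u0).symm.trans List.count_nil)
      | cons hEn _ _ => exact hdead _ hEn
    · intro t _ hmax
      obtain ⟨⟨_, M'', hf'', hPre⟩, -⟩ := hmax
      have heq : M'' = M := fires_det hf'' hfire
      exact hdead t (fun p => heq ▸ hPre p)
  · -- backward: representation ⇒ dead
    rintro ⟨Mb, σ, hMb, hImax, hfire, hnotmax⟩ t hEn
    obtain ⟨hσTI, hexM, hnobig⟩ := hImax
    by_cases htTI : t ∈ TI
    · apply hnobig
      refine ⟨σ ++ [t], ?_, ⟨fun p => M p + N.Post p t - N.Pre p t,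
        fires_append hfire (Fires.cons hEn (fun p => rfl) (Fires.nil _))⟩, ?_, ⟨t, ?_⟩⟩
      · intro u hu
        rcases List.mem_append.mp hu with h | h
        · exact hσTI u h
        · rw [List.mem_singleton.mp h]; exact htTI
      · intro u
        rw [List.count_append]; omega
      · rw [List.count_append, count_cons' t t [], List.count_nil, if_pos rfl]
        omega
    · have htTE : t ∈ TE := (hbp.1 t).mpr htTI
      have hexpl : σ ∈ N.Expl TI Mb t := ⟨hσTI, M, hfire, hEn⟩
      have hnm := hnotmax t htTE
      have hex : ∃ σ' ∈ N.Expl TI Mb t,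
          (∀ u, σ.count u ≤ σ'.count u) ∧ ∃ u, σ'.count u ≠ σ.count u := by
        by_contra h
        exact hnm ⟨hexpl, h⟩
      obtain ⟨σ', ⟨hσ'TI, M'', hf'', -⟩, hle, hne⟩ := hex
      exact hnobig ⟨σ', hσ'TI, ⟨M'', hf''⟩, hle, hne⟩
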